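/- For every integer l ≥ 4 that is not a multiple of 3, the graph G(l) satisfies λ(G(l)) = 6. -/

import Mathlib

/-- An L(2,1)-labeling of a simple graph: adjacent vertices get labels differing by
at least 2, and vertices at distance exactly 2 get distinct labels. -/
def IsL21Labeling {V : Type*} (G : SimpleGraph V) (f : V → ℕ) : Prop :=
  (∀ a b : V, G.Adj a b → 2 ≤ ((f a : ℤ) - (f b : ℤ)).natAbs) ∧
  (∀ a b : V, G.dist a b = 2 → f a ≠ f b)

/-- A k-L(2,1)-labeling: an L(2,1)-labeling with all labels in {0, 1, ..., k}. -/
def IsKL21Labeling {V : Type*} (G : SimpleGraph V) (k : ℕ) (f : V → ℕ) : Prop :=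
  IsL21Labeling G f ∧ ∀ a : V, f a ≤ k

/-- The λ-number of a graph: the least k such that G admits a k-L(2,1)-labeling. -/
noncomputable def lambdaNumber {V : Type*} (G : SimpleGraph V) : ℕ :=
  sInf {k : ℕ | ∃ f : V → ℕ, IsKL21Labeling G k f}

/-- The vertices of the graph G(l): u, v, x_1, ..., x_l, y_1, ..., y_l.
Here `x i` for `i : Fin l` stands for the paper's x_{i+1} (0-indexed). -/
inductive GLVert (l : ℕ) : Type where
  | u : GLVert l
  | v : GLVert l
  | x : Fin l → GLVert l
  | y : Fin l → GLVert l

/-- The edge relation of G(l) (up to symmetrization):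
x_i x_{i+1}, y_i y_{i+1}, x_i y_i, u x_1, u y_1, v x_l, v y_l. -/
def GLRel (l : ℕ) : GLVert l → GLVert l → Prop
  | .x i, .x j => (i : ℕ) + 1 = (j : ℕ)
  | .y i, .y j => (i : ℕ) + 1 = (j : ℕ)
  | .x i, .y j => i = j
  | .u, .x i => (i : ℕ) = 0
  | .u, .y i => (i : ℕ) = 0
  | .x i, .v => (i : ℕ) = l - 1
  | .y i, .v => (i : ℕ) = l - 1
  | _, _ => False

/-- The graph G(l) from the paper. -/
def GLGraph (l : ℕ) : SimpleGraph (GLVert l) := SimpleGraph.fromRel (GLRel l)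

section DistLemmas
variable {V : Type*} {G : SimpleGraph V} {a b c : V}

lemma dist_eq_two' (h1 : G.Adj a c) (h2 : G.Adj c b) (hne : a ≠ b) (hna : ¬ G.Adj a b) :
    G.dist a b = 2 := by
  have hr : G.Reachable a b := ⟨SimpleGraph.Walk.cons h1 h2.toWalk⟩
  have hle := SimpleGraph.dist_le (SimpleGraph.Walk.cons h1 h2.toWalk)
  simp only [SimpleGraph.Walk.length_cons, SimpleGraph.Adj.toWalk,
    SimpleGraph.Walk.length_nil] at hle
  have h0 : G.dist a b ≠ 0 := Nat.pos_iff_ne_zero.mp (hr.pos_dist_of_ne hne)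
  have h1' : G.dist a b ≠ 1 := fun h => hna (SimpleGraph.dist_eq_one_iff_adj.mp h)
  omega

lemma exists_mid_of_dist_two (h : G.dist a b = 2) :
    a ≠ b ∧ ∃ c, G.Adj a c ∧ G.Adj c b := by
  have hne : a ≠ b := by rintro rfl; simp [SimpleGraph.dist_self] at h
  have hr : G.Reachable a b := by
    by_contra hn
    rw [SimpleGraph.dist_eq_zero_of_not_reachable hn] at h
    exact absurd h (by norm_num)
  obtain ⟨p, hp⟩ := hr.exists_walk_length_eq_dist
  rw [h] at hp
  refine ⟨hne, ?_⟩
  cases p with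
  | nil => simp at hp
  | cons h1 q =>
    cases q with
    | nil => simp at hp
    | cons h2 r =>
      cases r with
      | nil => exact ⟨_, h1, h2⟩
      | cons h3 s => simp [SimpleGraph.Walk.length_cons] at hp
end DistLemmas

namespace GLVert
section
variable {l : ℕ}

lemma gl_adj_iff (p q : GLVert l) :
    (GLGraph l).Adj p q ↔ p ≠ q ∧ (GLRel l p q ∨ GLRel l q p) :=
  SimpleGraph.fromRel_adj _ _ _

lemma adj_xx {i j : Fin l} (h : (i : ℕ) + 1 = j) : (GLGraph l).Adj (.x i) (.x j) := by
  rw [gl_adj_iff]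
  exact ⟨by simp only [ne_eq, x.injEq]; intro e; subst e; omega, Or.inl h⟩

lemma adj_yy {i j : Fin l} (h : (i : ℕ) + 1 = j) : (GLGraph l).Adj (.y i) (.y j) := by
  rw [gl_adj_iff]
  exact ⟨by simp only [ne_eq, y.injEq]; intro e; subst e; omega, Or.inl h⟩

lemma adj_xy (i : Fin l) : (GLGraph l).Adj (.x i) (.y i) := by
  rw [gl_adj_iff]
  exact ⟨fun h => (by cases h), Or.inl rfl⟩

lemma adj_ux {i : Fin l} (h : (i : ℕ) = 0) : (GLGraph l).Adj .u (.x i) := by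
  rw [gl_adj_iff]
  exact ⟨fun h => (by cases h), Or.inl h⟩

lemma adj_uy {i : Fin l} (h : (i : ℕ) = 0) : (GLGraph l).Adj .u (.y i) := by
  rw [gl_adj_iff]
  exact ⟨fun h => (by cases h), Or.inl h⟩

lemma adj_xv {i : Fin l} (h : (i : ℕ) = l - 1) : (GLGraph l).Adj (.x i) .v := by
  rw [gl_adj_iff]
  exact ⟨fun h => (by cases h), Or.inl h⟩

lemma adj_yv {i : Fin l} (h : (i : ℕ) = l - 1) : (GLGraph l).Adj (.y i) .v := by
  rw [gl_adj_iff]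
  exact ⟨fun h => (by cases h), Or.inl h⟩

lemma nbr_u {p : GLVert l} (h : (GLGraph l).Adj p .u) :
    ∃ i : Fin l, (i : ℕ) = 0 ∧ (p = .x i ∨ p = .y i) := by
  rw [gl_adj_iff] at h
  obtain ⟨-, h | h⟩ := h <;> rcases p with _ | _ | i | i <;> simp only [GLRel] at h <;>
    exact ⟨i, h, by simp⟩

lemma nbr_v {p : GLVert l} (h : (GLGraph l).Adj p .v) :
    ∃ i : Fin l, (i : ℕ) = l - 1 ∧ (p = .x i ∨ p = .y i) := by
  rw [gl_adj_iff] at h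
  obtain ⟨-, h | h⟩ := h <;> rcases p with _ | _ | i | i <;> simp only [GLRel] at h <;>
    exact ⟨i, h, by simp⟩

lemma nbr_x {p : GLVert l} {k : Fin l} (h : (GLGraph l).Adj p (.x k)) :
    (∃ j : Fin l, p = .x j ∧ ((j : ℕ) + 1 = k ∨ (k : ℕ) + 1 = j)) ∨
      p = .y k ∨ (p = .u ∧ (k : ℕ) = 0) ∨ (p = .v ∧ (k : ℕ) = l - 1) := by
  rw [gl_adj_iff] at h
  obtain ⟨-, h | h⟩ := h <;> rcases p with _ | _ | j | j <;> simp only [GLRel] at h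
  · exact Or.inr (Or.inr (Or.inl ⟨rfl, h⟩))
  · exact Or.inl ⟨j, rfl, Or.inl h⟩
  · exact Or.inr (Or.inr (Or.inr ⟨rfl, h⟩))
  · exact Or.inl ⟨j, rfl, Or.inr h⟩
  · exact Or.inr (Or.inl (congrArg GLVert.y h).symm)

lemma nbr_y {p : GLVert l} {k : Fin l} (h : (GLGraph l).Adj p (.y k)) :
    (∃ j : Fin l, p = .y j ∧ ((j : ℕ) + 1 = k ∨ (k : ℕ) + 1 = j)) ∨
      p = .x k ∨ (p = .u ∧ (k : ℕ) = 0) ∨ (p = .v ∧ (k : ℕ) = l - 1) := by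
  rw [gl_adj_iff] at h
  obtain ⟨-, h | h⟩ := h <;> rcases p with _ | _ | j | j <;> simp only [GLRel] at h
  · exact Or.inr (Or.inr (Or.inl ⟨rfl, h⟩))
  · exact Or.inr (Or.inl (congrArg GLVert.x h))
  · exact Or.inl ⟨j, rfl, Or.inl h⟩
  · exact Or.inr (Or.inr (Or.inr ⟨rfl, h⟩))
  · exact Or.inl ⟨j, rfl, Or.inr h⟩
end
end GLVert

def fup (l : ℕ) : GLVert l → ℕ
  | .u => 6
  | .v => 6
  | .x i => 4 * (i : ℕ) % 6
  | .y i => (4 * (i : ℕ) + 3) % 6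

theorem fup_isK {l : ℕ} (hl : 4 ≤ l) (h3 : ¬ 3 ∣ l) :
    IsKL21Labeling (GLGraph l) 6 (fup l) := by
  refine ⟨⟨?_, ?_⟩, ?_⟩
  · intro p q h
    rw [GLVert.gl_adj_iff] at h
    obtain ⟨hne, h⟩ := h
    rcases p with _ | _ | i | i <;> rcases q with _ | _ | j | j <;>
        simp only [GLRel, or_false, false_or, or_self, fup] at h ⊢ <;>
      omega
  · intro p q hd
    obtain ⟨hne, c, h1, h2⟩ := exists_mid_of_dist_two hd
    rcases c with _ | _ | k | k
    · obtain ⟨i, hi0, hp⟩ := GLVert.nbr_u h1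
      obtain ⟨j, hj0, hq⟩ := GLVert.nbr_u h2.symm
      rcases hp with rfl | rfl <;> rcases hq with rfl | rfl <;>
          simp only [ne_eq, GLVert.x.injEq, GLVert.y.injEq, Fin.ext_iff] at hne <;>
          simp only [fup] <;>
        omega
    · obtain ⟨i, hi0, hp⟩ := GLVert.nbr_v h1
      obtain ⟨j, hj0, hq⟩ := GLVert.nbr_v h2.symm
      rcases hp with rfl | rfl <;> rcases hq with rfl | rfl <;>
          simp only [ne_eq, GLVert.x.injEq, GLVert.y.injEq, Fin.ext_iff] at hne <;>
          simp only [fup] <;>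
        omega
    · rcases GLVert.nbr_x h1 with ⟨j1, rfl, hj1⟩ | rfl | ⟨rfl, hk⟩ | ⟨rfl, hk⟩ <;>
          rcases GLVert.nbr_x h2.symm with ⟨j2, rfl, hj2⟩ | rfl | ⟨rfl, hk2⟩ | ⟨rfl, hk2⟩ <;>
          simp only [ne_eq, GLVert.x.injEq, GLVert.y.injEq, Fin.ext_iff, not_true_eq_false] at hne <;>
          simp only [fup] <;>
        omega
    · rcases GLVert.nbr_y h1 with ⟨j1, rfl, hj1⟩ | rfl | ⟨rfl, hk⟩ | ⟨rfl, hk⟩ <;>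
          rcases GLVert.nbr_y h2.symm with ⟨j2, rfl, hj2⟩ | rfl | ⟨rfl, hk2⟩ | ⟨rfl, hk2⟩ <;>
          simp only [ne_eq, GLVert.x.injEq, GLVert.y.injEq, Fin.ext_iff, not_true_eq_false] at hne <;>
          simp only [fup] <;>
        omega
  · intro p
    rcases p with _ | _ | i | i <;> simp only [fup] <;> omega

/-! ### Lower bound machinery -/

def d2b (a b : ℕ) : Bool := decide (a + 2 ≤ b) || decide (b + 2 ≤ a)
def pokb (a b c d : ℕ) : Bool := d2b a c && d2b b d && (a != d) && (b != c)
def tokb (a b c d e f : ℕ) : Bool :=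
  d2b a b && d2b c d && d2b e f && pokb a b c d && pokb c d e f && (a != e) && (b != f)
def stb (m a b c d : ℕ) : Bool :=
  d2b a b && d2b c d && pokb a b c d && d2b m a && d2b m b && (m != c) && (m != d)
def enb (w a b c d : ℕ) : Bool := d2b w c && d2b w d && (w != a) && (w != b)

def lR1 : List (ℕ×ℕ×ℕ×ℕ) := [(0,2,3,5), (0,3,4,1), (0,4,3,1), (0,4,5,1), (0,5,3,1), (0,5,4,1), (0,5,4,2), (1,3,4,0), (1,5,4,0), (1,5,4,2), (2,0,5,3), (2,4,5,1), (2,5,4,1), (3,0,1,4), (3,1,0,4), (3,5,0,2), (4,0,1,3), (4,0,1,5), (4,2,1,5), (5,0,1,3), (5,0,1,4), (5,0,2,4), (5,1,0,4), (5,1,2,4), (5,2,1,4), (5,3,2,0)]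
def lR2 : List (ℕ×ℕ×ℕ×ℕ) := [(0,4,5,2), (1,4,3,0), (1,4,5,2), (1,5,3,0), (4,0,2,5), (4,1,0,3), (4,1,2,5), (5,1,0,3)]
def lA : List (ℕ×ℕ×ℕ×ℕ) := [(0,3,2,5), (2,5,0,3), (3,0,5,2), (5,2,3,0)]
def lB : List (ℕ×ℕ×ℕ×ℕ) := [(0,3,4,1), (0,3,5,1), (2,5,4,0), (2,5,4,1), (3,0,1,4), (3,0,1,5), (5,2,0,4), (5,2,1,4)]
def lC : List (ℕ×ℕ×ℕ×ℕ) := [(0,4,3,1), (1,4,3,0), (1,4,5,2), (1,5,4,2), (4,0,1,3), (4,1,0,3), (4,1,2,5), (5,1,2,4)]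

def stepOK (src tgt : List (ℕ×ℕ×ℕ×ℕ)) : Bool :=
  src.all fun s => (List.range 6).all fun e => (List.range 6).all fun f =>
    !(tokb s.1 s.2.1 s.2.2.1 s.2.2.2 e f) || ((s.2.2.1, s.2.2.2, e, f) ∈ tgt : Bool)

theorem dec0 : ∀ m < 6, ∀ a < 6, ∀ b < 6, ∀ c < 6, ∀ d < 6,
    (stb m a b c d && !((a,b,c,d) ∈ lR1 : Bool)) = false := by decide
theorem dec1 : stepOK lR1 lR2 = true := by decide
theorem dec2 : stepOK lR2 lA = true := by decide
theorem dec3 : stepOK lA lB = true := by decide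
theorem dec4 : stepOK lB lC = true := by decide
theorem dec5 : stepOK lC lA = true := by decide
theorem dec6 : ((lA ++ lB).all fun s => (List.range 6).all fun w =>
    !(enb w s.1 s.2.1 s.2.2.1 s.2.2.2)) = true := by decide

lemma stepOK_mem {src tgt : List (ℕ×ℕ×ℕ×ℕ)} (h : stepOK src tgt = true) {a b c d e f : ℕ}
    (he : e < 6) (hfb : f < 6) (hm : (a,b,c,d) ∈ src) (ht : tokb a b c d e f = true) :
    (c,d,e,f) ∈ tgt := by
  have h1 := List.all_eq_true.mp h _ hm
  have h2 := List.all_eq_true.mp h1 e (List.mem_range.mpr he)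
  have h3 := List.all_eq_true.mp h2 f (List.mem_range.mpr hfb)
  simp only [ht, Bool.not_true, Bool.false_or, decide_eq_true_eq] at h3
  exact h3

namespace GLVert
variable {l : ℕ}

lemma nadj_xx {i j : Fin l} (h1 : (i : ℕ) + 1 ≠ j) (h2 : (j : ℕ) + 1 ≠ i) :
    ¬ (GLGraph l).Adj (.x i) (.x j) := by
  intro ha
  rcases nbr_x ha with ⟨j', hj, hor⟩ | hh | ⟨hh, -⟩ | ⟨hh, -⟩
  · obtain rfl : i = j' := by simpa using hj
    rcases hor with h | h
    · exact h1 h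
    · exact h2 h
  · exact (by cases hh)
  · exact (by cases hh)
  · exact (by cases hh)

lemma nadj_yy {i j : Fin l} (h1 : (i : ℕ) + 1 ≠ j) (h2 : (j : ℕ) + 1 ≠ i) :
    ¬ (GLGraph l).Adj (.y i) (.y j) := by
  intro ha
  rcases nbr_y ha with ⟨j', hj, hor⟩ | hh | ⟨hh, -⟩ | ⟨hh, -⟩
  · obtain rfl : i = j' := by simpa using hj
    rcases hor with h | h
    · exact h1 h
    · exact h2 h
  · exact (by cases hh)
  · exact (by cases hh)
  · exact (by cases hh)

lemma nadj_xy {i j : Fin l} (h : i ≠ j) : ¬ (GLGraph l).Adj (.x i) (.y j) := by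
  intro ha
  rcases nbr_y ha with ⟨j', hj, -⟩ | hh | ⟨hh, -⟩ | ⟨hh, -⟩
  · exact (by cases hj)
  · exact h (by simpa using hh)
  · exact (by cases hh)
  · exact (by cases hh)

lemma nadj_yx {i j : Fin l} (h : i ≠ j) : ¬ (GLGraph l).Adj (.y i) (.x j) := by
  intro ha
  rcases nbr_x ha with ⟨j', hj, -⟩ | hh | ⟨hh, -⟩ | ⟨hh, -⟩
  · exact (by cases hj)
  · exact h (by simpa using hh)
  · exact (by cases hh)
  · exact (by cases hh)

lemma nadj_ux {i : Fin l} (h : (i : ℕ) ≠ 0) : ¬ (GLGraph l).Adj .u (.x i) := by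
  intro ha
  rcases nbr_x ha with ⟨j', hj, -⟩ | hh | ⟨-, hh⟩ | ⟨hh, -⟩
  · exact (by cases hj)
  · exact (by cases hh)
  · exact h hh
  · exact (by cases hh)

lemma nadj_uy {i : Fin l} (h : (i : ℕ) ≠ 0) : ¬ (GLGraph l).Adj .u (.y i) := by
  intro ha
  rcases nbr_y ha with ⟨j', hj, -⟩ | hh | ⟨-, hh⟩ | ⟨hh, -⟩
  · exact (by cases hj)
  · exact (by cases hh)
  · exact h hh
  · exact (by cases hh)

lemma nadj_xv {i : Fin l} (h : (i : ℕ) ≠ l - 1) : ¬ (GLGraph l).Adj (.x i) .v := by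
  intro ha
  obtain ⟨j, hj, hor⟩ := nbr_v ha
  rcases hor with hh | hh
  · obtain rfl : i = j := by simpa using hh
    exact h hj
  · exact (by cases hh)

lemma nadj_yv {i : Fin l} (h : (i : ℕ) ≠ l - 1) : ¬ (GLGraph l).Adj (.y i) .v := by
  intro ha
  obtain ⟨j, hj, hor⟩ := nbr_v ha
  rcases hor with hh | hh
  · exact (by cases hh)
  · obtain rfl : i = j := by simpa using hh
    exact h hj

end GLVert

def Aseq (l : ℕ) (f : GLVert l → ℕ) (i : ℕ) : ℕ := if h : i < l then f (.x ⟨i, h⟩) else 0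
def Bseq (l : ℕ) (f : GLVert l → ℕ) (i : ℕ) : ℕ := if h : i < l then f (.y ⟨i, h⟩) else 0




lemma d2b_intro {a b : ℕ} (h : a + 2 ≤ b ∨ b + 2 ≤ a) : d2b a b = true := by
  simp only [d2b, Bool.or_eq_true, decide_eq_true_eq]; exact h

lemma bne_intro {a b : ℕ} (h : a ≠ b) : (a != b) = true := bne_iff_ne.mpr h

lemma pokb_intro {a b c d : ℕ} (h1 : a + 2 ≤ c ∨ c + 2 ≤ a) (h2 : b + 2 ≤ d ∨ d + 2 ≤ b)
    (h3 : a ≠ d) (h4 : b ≠ c) : pokb a b c d = true := by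
  simp only [pokb, Bool.and_eq_true]
  exact ⟨⟨⟨d2b_intro h1, d2b_intro h2⟩, bne_intro h3⟩, bne_intro h4⟩

lemma tokb_intro {a b c d e f : ℕ}
    (h1 : a + 2 ≤ b ∨ b + 2 ≤ a) (h2 : c + 2 ≤ d ∨ d + 2 ≤ c) (h3 : e + 2 ≤ f ∨ f + 2 ≤ e)
    (h4 : a + 2 ≤ c ∨ c + 2 ≤ a) (h5 : b + 2 ≤ d ∨ d + 2 ≤ b) (h6 : a ≠ d) (h7 : b ≠ c)
    (h8 : c + 2 ≤ e ∨ e + 2 ≤ c) (h9 : d + 2 ≤ f ∨ f + 2 ≤ d) (h10 : c ≠ f) (h11 : d ≠ e)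
    (h12 : a ≠ e) (h13 : b ≠ f) : tokb a b c d e f = true := by
  simp only [tokb, Bool.and_eq_true]
  exact ⟨⟨⟨⟨⟨⟨d2b_intro h1, d2b_intro h2⟩, d2b_intro h3⟩, pokb_intro h4 h5 h6 h7⟩,
    pokb_intro h8 h9 h10 h11⟩, bne_intro h12⟩, bne_intro h13⟩

lemma stb_intro {m a b c d : ℕ}
    (h1 : a + 2 ≤ b ∨ b + 2 ≤ a) (h2 : c + 2 ≤ d ∨ d + 2 ≤ c)
    (h3 : a + 2 ≤ c ∨ c + 2 ≤ a) (h4 : b + 2 ≤ d ∨ d + 2 ≤ b) (h5 : a ≠ d) (h6 : b ≠ c)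
    (h7 : m + 2 ≤ a ∨ a + 2 ≤ m) (h8 : m + 2 ≤ b ∨ b + 2 ≤ m) (h9 : m ≠ c) (h10 : m ≠ d) :
    stb m a b c d = true := by
  simp only [stb, Bool.and_eq_true]
  exact ⟨⟨⟨⟨⟨⟨d2b_intro h1, d2b_intro h2⟩, pokb_intro h3 h4 h5 h6⟩, d2b_intro h7⟩,
    d2b_intro h8⟩, bne_intro h9⟩, bne_intro h10⟩

lemma enb_intro {w a b c d : ℕ} (h1 : w + 2 ≤ c ∨ c + 2 ≤ w) (h2 : w + 2 ≤ d ∨ d + 2 ≤ w)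
    (h3 : w ≠ a) (h4 : w ≠ b) : enb w a b c d = true := by
  simp only [enb, Bool.and_eq_true]
  exact ⟨⟨⟨d2b_intro h1, d2b_intro h2⟩, bne_intro h3⟩, bne_intro h4⟩

set_option maxHeartbeats 1600000 in
theorem no5 {l : ℕ} (hl : 4 ≤ l) (hnd : ¬ 3 ∣ l) (f : GLVert l → ℕ)
    (hf : IsKL21Labeling (GLGraph l) 5 f) : False := by
  obtain ⟨⟨hadj, hdst⟩, hbnd⟩ := hf
  have hAv : ∀ i (h : i < l), Aseq l f i = f (.x ⟨i, h⟩) := fun i h => dif_pos h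
  have hBv : ∀ i (h : i < l), Bseq l f i = f (.y ⟨i, h⟩) := fun i h => dif_pos h
  have hbd : ∀ i, i < l → Aseq l f i ≤ 5 ∧ Bseq l f i ≤ 5 := by
    intro i h; rw [hAv i h, hBv i h]; exact ⟨hbnd _, hbnd _⟩
  have c1 : ∀ i, i < l → (Aseq l f i + 2 ≤ Bseq l f i ∨ Bseq l f i + 2 ≤ Aseq l f i) := by
    intro i h
    have := hadj _ _ (GLVert.adj_xy (⟨i, h⟩ : Fin l))
    rw [hAv i h, hBv i h]; omega
  have c2a : ∀ i, i + 1 < l →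
      (Aseq l f i + 2 ≤ Aseq l f (i+1) ∨ Aseq l f (i+1) + 2 ≤ Aseq l f i) := by
    intro i h
    have := hadj _ _ (GLVert.adj_xx (i := ⟨i, by omega⟩) (j := ⟨i+1, h⟩) rfl)
    rw [hAv i (by omega), hAv (i+1) h]; omega
  have c2b : ∀ i, i + 1 < l →
      (Bseq l f i + 2 ≤ Bseq l f (i+1) ∨ Bseq l f (i+1) + 2 ≤ Bseq l f i) := by
    intro i h
    have := hadj _ _ (GLVert.adj_yy (i := ⟨i, by omega⟩) (j := ⟨i+1, h⟩) rfl)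
    rw [hBv i (by omega), hBv (i+1) h]; omega
  have c2c : ∀ i, i + 1 < l → Aseq l f i ≠ Bseq l f (i+1) := by
    intro i h
    have hd : (GLGraph l).dist (.x ⟨i, by omega⟩) (.y ⟨i+1, h⟩) = 2 :=
      dist_eq_two' (GLVert.adj_xx (j := ⟨i+1, h⟩) rfl) (GLVert.adj_xy _)
        (fun hh => (by cases hh))
        (GLVert.nadj_xy (by simp only [ne_eq, Fin.mk.injEq]; omega))
    have := hdst _ _ hd
    rw [hAv i (by omega), hBv (i+1) h]; exact this
  have c2d : ∀ i, i + 1 < l → Bseq l f i ≠ Aseq l f (i+1) := by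
    intro i h
    have hd : (GLGraph l).dist (.y ⟨i, by omega⟩) (.x ⟨i+1, h⟩) = 2 :=
      dist_eq_two' (GLVert.adj_yy (j := ⟨i+1, h⟩) rfl) ((GLVert.adj_xy _).symm)
        (fun hh => (by cases hh))
        (GLVert.nadj_yx (by simp only [ne_eq, Fin.mk.injEq]; omega))
    have := hdst _ _ hd
    rw [hBv i (by omega), hAv (i+1) h]; exact this
  have c3a : ∀ i, i + 2 < l → Aseq l f i ≠ Aseq l f (i+2) := by
    intro i h
    have hd : (GLGraph l).dist (.x ⟨i, by omega⟩) (.x ⟨i+2, h⟩) = 2 :=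
      dist_eq_two' (GLVert.adj_xx (i := ⟨i, by omega⟩) (j := ⟨i+1, by omega⟩) rfl)
        (GLVert.adj_xx (j := ⟨i+2, h⟩) rfl)
        (by simp only [ne_eq, GLVert.x.injEq, Fin.mk.injEq]; omega)
        (GLVert.nadj_xx (by omega : i + 1 ≠ i + 2) (by omega : i + 2 + 1 ≠ i))
    have := hdst _ _ hd
    rw [hAv i (by omega), hAv (i+2) h]; exact this
  have c3b : ∀ i, i + 2 < l → Bseq l f i ≠ Bseq l f (i+2) := by
    intro i h
    have hd : (GLGraph l).dist (.y ⟨i, by omega⟩) (.y ⟨i+2, h⟩) = 2 :=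
      dist_eq_two' (GLVert.adj_yy (i := ⟨i, by omega⟩) (j := ⟨i+1, by omega⟩) rfl)
        (GLVert.adj_yy (j := ⟨i+2, h⟩) rfl)
        (by simp only [ne_eq, GLVert.y.injEq, Fin.mk.injEq]; omega)
        (GLVert.nadj_yy (by omega : i + 1 ≠ i + 2) (by omega : i + 2 + 1 ≠ i))
    have := hdst _ _ hd
    rw [hBv i (by omega), hBv (i+2) h]; exact this
  have cu1 : 2 ≤ ((f GLVert.u : ℤ) - (Aseq l f 0 : ℤ)).natAbs := by
    have := hadj _ _ (GLVert.adj_ux (i := ⟨0, by omega⟩) rfl)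
    rw [hAv 0 (by omega)]; omega
  have cu2 : 2 ≤ ((f GLVert.u : ℤ) - (Bseq l f 0 : ℤ)).natAbs := by
    have := hadj _ _ (GLVert.adj_uy (i := ⟨0, by omega⟩) rfl)
    rw [hBv 0 (by omega)]; omega
  have cu3 : f GLVert.u ≠ Aseq l f 1 := by
    have hd : (GLGraph l).dist GLVert.u (.x ⟨1, by omega⟩) = 2 :=
      dist_eq_two' (GLVert.adj_ux (i := ⟨0, by omega⟩) rfl)
        (GLVert.adj_xx (j := ⟨1, by omega⟩) rfl)
        (fun hh => (by cases hh))
        (GLVert.nadj_ux (by omega : (1 : ℕ) ≠ 0))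
    have := hdst _ _ hd
    rw [hAv 1 (by omega)]; exact this
  have cu4 : f GLVert.u ≠ Bseq l f 1 := by
    have hd : (GLGraph l).dist GLVert.u (.y ⟨1, by omega⟩) = 2 :=
      dist_eq_two' (GLVert.adj_uy (i := ⟨0, by omega⟩) rfl)
        (GLVert.adj_yy (j := ⟨1, by omega⟩) rfl)
        (fun hh => (by cases hh))
        (GLVert.nadj_uy (by omega : (1 : ℕ) ≠ 0))
    have := hdst _ _ hd
    rw [hBv 1 (by omega)]; exact this
  have cv1 : 2 ≤ ((f GLVert.v : ℤ) - (Aseq l f (l-1) : ℤ)).natAbs := by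
    have := hadj _ _ (GLVert.adj_xv (i := ⟨l-1, by omega⟩) rfl)
    rw [← hAv (l-1) (by omega)] at this; omega
  have cv2 : 2 ≤ ((f GLVert.v : ℤ) - (Bseq l f (l-1) : ℤ)).natAbs := by
    have := hadj _ _ (GLVert.adj_yv (i := ⟨l-1, by omega⟩) rfl)
    rw [← hBv (l-1) (by omega)] at this; omega
  have cv3 : Aseq l f (l-2) ≠ f GLVert.v := by
    have hd : (GLGraph l).dist (.x ⟨l-2, by omega⟩) GLVert.v = 2 :=
      dist_eq_two' (GLVert.adj_xx (i := ⟨l-2, by omega⟩) (j := ⟨l-1, by omega⟩)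
          (show l - 2 + 1 = l - 1 by omega))
        (GLVert.adj_xv rfl) (fun hh => (by cases hh))
        (GLVert.nadj_xv (show l - 2 ≠ l - 1 by omega))
    have := hdst _ _ hd
    rw [← hAv (l-2) (by omega)] at this; exact this
  have cv4 : Bseq l f (l-2) ≠ f GLVert.v := by
    have hd : (GLGraph l).dist (.y ⟨l-2, by omega⟩) GLVert.v = 2 :=
      dist_eq_two' (GLVert.adj_yy (i := ⟨l-2, by omega⟩) (j := ⟨l-1, by omega⟩)
          (show l - 2 + 1 = l - 1 by omega))
        (GLVert.adj_yv rfl) (fun hh => (by cases hh))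
        (GLVert.nadj_yv (show l - 2 ≠ l - 1 by omega))
    have := hdst _ _ hd
    rw [← hBv (l-2) (by omega)] at this; exact this
  have htok : ∀ i, i + 2 < l → tokb (Aseq l f i) (Bseq l f i)
      (Aseq l f (i+1)) (Bseq l f (i+1)) (Aseq l f (i+2)) (Bseq l f (i+2)) = true := by
    intro i h
    have k1 := c1 i (by omega); have k2 := c1 (i+1) (by omega); have k3 := c1 (i+2) (by omega)
    have k4 := c2a i (by omega); have k5 := c2a (i+1) (by omega)
    have k6 := c2b i (by omega); have k7 := c2b (i+1) (by omega)
    have k8 := c2c i (by omega); have k9 := c2c (i+1) (by omega)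
    have k10 := c2d i (by omega); have k11 := c2d (i+1) (by omega)
    have k12 := c3a i h; have k13 := c3b i h
    have hre : i + 1 + 1 = i + 2 := by omega
    rw [hre] at k5 k7 k9 k11
    exact tokb_intro k1 k2 k3 k4 k6 k8 k10 k5 k7 k9 k11 k12 k13
  have hstb : stb (f GLVert.u) (Aseq l f 0) (Bseq l f 0) (Aseq l f 1) (Bseq l f 1) = true := by
    have k1 := c1 0 (by omega); have k2 := c1 1 (by omega)
    have k4 := c2a 0 (by omega); have k6 := c2b 0 (by omega)
    have k8 := c2c 0 (by omega); have k10 := c2d 0 (by omega)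
    simp only [Nat.zero_add] at k4 k6 k8 k10
    have m1 : f GLVert.u + 2 ≤ Aseq l f 0 ∨ Aseq l f 0 + 2 ≤ f GLVert.u := by
      clear * - cu1; omega
    have m2 : f GLVert.u + 2 ≤ Bseq l f 0 ∨ Bseq l f 0 + 2 ≤ f GLVert.u := by
      clear * - cu2; omega
    exact stb_intro k1 k2 k4 k6 k8 k10 m1 m2 cu3 cu4
  have hb0 := hbd 0 (by omega); have hb1 := hbd 1 (by omega)
  have hb2 := hbd 2 (by omega); have hb3 := hbd 3 (by omega)
  have hbu := hbnd GLVert.u; have hbv := hbnd GLVert.v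
  have hmem1 : (Aseq l f 0, Bseq l f 0, Aseq l f 1, Bseq l f 1) ∈ lR1 := by
    have hd := dec0 (f GLVert.u) (by omega) (Aseq l f 0) (by omega) (Bseq l f 0) (by omega)
      (Aseq l f 1) (by omega) (Bseq l f 1) (by omega)
    rw [hstb] at hd
    simpa using hd
  have hmem2 : (Aseq l f 1, Bseq l f 1, Aseq l f 2, Bseq l f 2) ∈ lR2 :=
    stepOK_mem dec1 (by omega) (by omega) hmem1 (htok 0 (by omega))
  have hmemA3 : (Aseq l f 2, Bseq l f 2, Aseq l f 3, Bseq l f 3) ∈ lA :=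
    stepOK_mem dec2 (by omega) (by omega) hmem2 (htok 1 (by omega))
  have key : ∀ p, 2 ≤ p → p + 1 < l →
      ((p % 3 = 2 → (Aseq l f p, Bseq l f p, Aseq l f (p+1), Bseq l f (p+1)) ∈ lA) ∧
       (p % 3 = 0 → (Aseq l f p, Bseq l f p, Aseq l f (p+1), Bseq l f (p+1)) ∈ lB) ∧
       (p % 3 = 1 → (Aseq l f p, Bseq l f p, Aseq l f (p+1), Bseq l f (p+1)) ∈ lC)) := by
    intro p hp
    induction p, hp using Nat.le_induction with
    | base =>
      intro _
      exact ⟨fun _ => hmemA3, fun hc => absurd hc (by omega), fun hc => absurd hc (by omega)⟩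
    | succ p hp ih =>
      intro hpl
      have hre : p + 1 + 1 = p + 2 := by omega
      rw [hre]
      have ihp := ih (by omega)
      have hbp2 := hbd (p+2) (by omega)
      have htk := htok p (by omega)
      have hm3 : p % 3 = 0 ∨ p % 3 = 1 ∨ p % 3 = 2 := by omega
      rcases hm3 with h | h | h
      · exact ⟨fun hc => absurd hc (by omega), fun hc => absurd hc (by omega),
          fun _ => stepOK_mem dec4 (by omega) (by omega) (ihp.2.1 h) htk⟩
      · exact ⟨fun _ => stepOK_mem dec5 (by omega) (by omega) (ihp.2.2 h) htk,
          fun hc => absurd hc (by omega), fun hc => absurd hc (by omega)⟩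
      · exact ⟨fun hc => absurd hc (by omega),
          fun _ => stepOK_mem dec3 (by omega) (by omega) (ihp.1 h) htk,
          fun hc => absurd hc (by omega)⟩
  have hfin := key (l-2) (by omega) (by omega)
  have heq : l - 2 + 1 = l - 1 := by omega
  rw [heq] at hfin
  have henb : enb (f GLVert.v) (Aseq l f (l-2)) (Bseq l f (l-2))
      (Aseq l f (l-1)) (Bseq l f (l-1)) = true := by
    have m1 : f GLVert.v + 2 ≤ Aseq l f (l-1) ∨ Aseq l f (l-1) + 2 ≤ f GLVert.v := by
      clear * - cv1; omega
    have m2 : f GLVert.v + 2 ≤ Bseq l f (l-1) ∨ Bseq l f (l-1) + 2 ≤ f GLVert.v := by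
      clear * - cv2; omega
    exact enb_intro m1 m2 (Ne.symm cv3) (Ne.symm cv4)
  have habs : (Aseq l f (l-2), Bseq l f (l-2), Aseq l f (l-1), Bseq l f (l-1)) ∈ lA ++ lB →
      False := by
    intro hs
    have h2 := List.all_eq_true.mp dec6 _ hs
    have h3' := List.all_eq_true.mp h2 (f GLVert.v) (List.mem_range.mpr (by omega))
    simp [henb] at h3'
  have hm3 : (l-2) % 3 = 0 ∨ (l-2) % 3 = 1 ∨ (l-2) % 3 = 2 := by omega
  rcases hm3 with h | h | h
  · exact habs (List.mem_append_right _ (hfin.2.1 h))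
  · exact hnd (by omega)
  · exact habs (List.mem_append_left _ (hfin.1 h))

theorem stmt0 (l : ℕ) (hl : 4 ≤ l) (h3 : ¬ 3 ∣ l) :
    lambdaNumber (GLGraph l) = 6 := by
  have hmem : 6 ∈ {k : ℕ | ∃ f : GLVert l → ℕ, IsKL21Labeling (GLGraph l) k f} :=
    ⟨fup l, fup_isK hl h3⟩
  unfold lambdaNumber
  refine le_antisymm (Nat.sInf_le hmem) (le_csInf ⟨6, hmem⟩ ?_)
  rintro k ⟨f, hf⟩
  by_contra hk
  exact no5 hl h3 f ⟨hf.1, fun a => le_trans (hf.2 a) (by omega)⟩
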